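/- Let p be a real polynomial of even degree n ≥ 2 such that p has no real zeros and p' has exactly one real zero p₀, which is simple. Suppose p'' has at least one real zero in (p₀, +∞), and let z_m be the largest real zero of p''. Let K(x) = p'(x)²/(p''(x)·p(x)) on (z_m, +∞) (note p(x)·p''(x) > 0 there). If either K has no local extremum at any point of (z_m, +∞), or every point b ∈ (z_m, +∞) at which K has a local minimum satisfies K(b) > n/(n−1), then the polynomial Δ(x) = (n−1)·p'(x)² − n·p(x)·p''(x) has no zeros in (z_m, +∞). -/

import Mathlib

open Polynomial

open Filter Set Topology

private theorem lc_deriv' (p : ℝ[X]) (h : 0 < p.natDegree) :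
    (derivative p).leadingCoeff = p.leadingCoeff * p.natDegree := by
  have hd : (derivative p).natDegree = p.natDegree - 1 :=
    natDegree_eq_of_degree_eq_some (degree_derivative_eq p h)
  rw [leadingCoeff, hd, coeff_derivative, Nat.sub_add_cancel h, leadingCoeff]
  push_cast [Nat.cast_sub h]
  ring

/-- in the right infinite interval (z_m, +∞), if K has no local extremum,
or all local minimum values of K there exceed n/(n−1), then Δ has no zeros there. -/
theorem no_zero_in_right_infinite_interval (p : Polynomial ℝ)
    (hdeg : 2 ≤ p.natDegree) (heven : Even p.natDegree)
    (hp : ∀ x : ℝ, p.eval x ≠ 0)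
    (p₀ : ℝ) (hp₀ : (derivative p).eval p₀ = 0)
    (huniq : ∀ x : ℝ, (derivative p).eval x = 0 → x = p₀)
    (hsimple : Polynomial.rootMultiplicity p₀ (derivative p) = 1)
    (hex : ∃ z : ℝ, p₀ < z ∧ (derivative (derivative p)).eval z = 0)
    (zm : ℝ) (hzm : (derivative (derivative p)).eval zm = 0)
    (hlargest : ∀ z : ℝ, (derivative (derivative p)).eval z = 0 → z ≤ zm)
    (hyp :
      (∀ x ∈ Set.Ioi zm,
        ¬ IsLocalExtr (fun y : ℝ => ((derivative p).eval y) ^ 2 /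
            (((derivative (derivative p)).eval y) * p.eval y)) x) ∨
      (∀ b ∈ Set.Ioi zm,
        IsLocalMin (fun y : ℝ => ((derivative p).eval y) ^ 2 /
            (((derivative (derivative p)).eval y) * p.eval y)) b →
        (p.natDegree : ℝ) / ((p.natDegree : ℝ) - 1) <
          ((derivative p).eval b) ^ 2 /
            (((derivative (derivative p)).eval b) * p.eval b))) :
    ∀ x ∈ Set.Ioi zm,
      (Polynomial.C ((p.natDegree : ℝ) - 1) * (derivative p) ^ 2 -
        Polynomial.C (p.natDegree : ℝ) * p * derivative (derivative p)).eval x ≠ 0 := by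
  set n := p.natDegree with hn
  set K : ℝ → ℝ := fun y : ℝ => ((derivative p).eval y) ^ 2 /
      (((derivative (derivative p)).eval y) * p.eval y) with hK
  set K₀ : ℝ := (n : ℝ) / ((n : ℝ) - 1) with hK₀
  -- basic degree facts
  have hp0 : p ≠ 0 := fun h => hp 0 (by simp [h])
  have hnpos : 0 < n := by omega
  have hd1 : (derivative p).natDegree = n - 1 :=
    natDegree_eq_of_degree_eq_some (degree_derivative_eq p hnpos)
  have hzmp₀ : p₀ < zm := by
    obtain ⟨z, hz1, hz2⟩ := hex
    exact lt_of_lt_of_le hz1 (hlargest z hz2)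
  have hd2pos : 0 < (derivative p).natDegree := by omega
  have hd2 : (derivative (derivative p)).natDegree = n - 2 := by
    have := natDegree_eq_of_degree_eq_some (degree_derivative_eq (derivative p) hd2pos)
    rw [hd1] at this; omega
  have hpp0 : derivative (derivative p) ≠ 0 := by
    intro h
    have := degree_derivative_eq (derivative p) hd2pos
    rw [h, degree_zero] at this
    exact absurd this.symm (by simp)
  have hn3 : 3 ≤ n := by
    by_contra h
    have hn2 : n = 2 := by omega
    have : derivative (derivative p) = C ((derivative (derivative p)).coeff 0) :=
      eq_C_of_natDegree_eq_zero (by omega)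
    rw [this] at hzm
    simp at hzm
    exact hpp0 (by rw [this, hzm, map_zero])
  -- p' nonzero on Ioi zm
  have hp' : ∀ x ∈ Set.Ioi zm, (derivative p).eval x ≠ 0 := by
    intro x hx h
    have := huniq x h
    rw [this] at hx
    exact absurd hx (not_lt.2 hzmp₀.le)
  have hp'' : ∀ x ∈ Set.Ioi zm, (derivative (derivative p)).eval x ≠ 0 := by
    intro x hx h
    exact absurd (hlargest x h) (not_le.2 hx)
  -- leading coefficients
  have ha : p.leadingCoeff ≠ 0 := leadingCoeff_ne_zero.2 hp0
  have hncast : (1:ℝ) ≤ (n:ℝ) := by exact_mod_cast hnpos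
  have hn1 : (0:ℝ) < (n : ℝ) - 1 := by
    have : (3:ℝ) ≤ (n:ℝ) := by exact_mod_cast hn3
    linarith
  have hlc1 : (derivative p).leadingCoeff = p.leadingCoeff * n := lc_deriv' p hnpos
  have hlc2 : (derivative (derivative p)).leadingCoeff =
      p.leadingCoeff * n * ((n : ℝ) - 1) := by
    have h2 := lc_deriv' (derivative p) hd2pos
    rw [hlc1, hd1] at h2
    rw [h2, Nat.cast_sub hnpos]
    push_cast
    ring
  -- the product polynomial G
  set G : ℝ[X] := p * derivative (derivative p) with hG
  have hG0 : G ≠ 0 := mul_ne_zero hp0 hpp0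
  have hGdeg : G.natDegree = n + (n - 2) := by
    rw [hG, natDegree_mul hp0 hpp0, hd2]
  have hGlc : G.leadingCoeff = p.leadingCoeff ^ 2 * n * ((n : ℝ) - 1) := by
    rw [hG, leadingCoeff_mul, hlc2]; ring
  have hGlcpos : 0 < G.leadingCoeff := by
    rw [hGlc]
    have h1 : 0 < p.leadingCoeff ^ 2 :=
      lt_of_le_of_ne (sq_nonneg _) (Ne.symm (pow_ne_zero 2 ha))
    have h2 : (0:ℝ) < (n:ℝ) := by linarith
    exact mul_pos (mul_pos h1 h2) hn1
  -- G positive on Ioi zm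
  have hGne : ∀ x ∈ Set.Ioi zm, G.eval x ≠ 0 := by
    intro x hx h
    rw [hG, eval_mul] at h
    rcases mul_eq_zero.1 h with h | h
    · exact hp x h
    · exact hp'' x hx h
  have hGpos : ∀ x ∈ Set.Ioi zm, 0 < G.eval x := by
    intro x hx
    by_contra hle
    have hxneg : G.eval x < 0 := lt_of_le_of_ne (not_lt.1 hle) (hGne x hx)
    have htop : Tendsto (fun y => G.eval y) atTop atTop := by
      apply G.tendsto_atTop_of_leadingCoeff_nonneg _ hGlcpos.le
      rw [degree_eq_natDegree hG0, hGdeg]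
      exact_mod_cast Nat.pos_of_ne_zero (by omega)
    obtain ⟨X, hX1, hX2⟩ := ((htop.eventually_gt_atTop 0).and (eventually_gt_atTop x)).exists
    have hcont : ContinuousOn (fun y => G.eval y) (Set.Icc x X) :=
      (Polynomial.continuous G).continuousOn
    have := intermediate_value_Ioo hX2.le hcont
    have h0 : (0:ℝ) ∈ Set.Ioo (G.eval x) (G.eval X) := ⟨hxneg, hX1⟩
    obtain ⟨z, hz, hz0⟩ := this h0
    have hz'' : (derivative (derivative p)).eval z = 0 := by
      simp only [hG, eval_mul] at hz0
      rcases mul_eq_zero.1 hz0 with h | h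
      · exact absurd h (hp z)
      · exact h
    have := hlargest z hz''
    have : zm < z := lt_trans hx hz.1
    linarith [hlargest z hz'']
  have hGpos' : ∀ x ∈ Set.Ioi zm, 0 < (derivative (derivative p)).eval x * p.eval x := by
    intro x hx
    have := hGpos x hx
    rw [hG, eval_mul] at this
    linarith [mul_comm (p.eval x) ((derivative (derivative p)).eval x)]
  -- continuity of K on Ioi zm
  have hKcont : ContinuousOn K (Set.Ioi zm) := by
    apply ContinuousOn.div
    · exact ((Polynomial.continuous (derivative p)).pow 2).continuousOn
    · exact (((Polynomial.continuous (derivative (derivative p)))).mul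
        (Polynomial.continuous p)).continuousOn
    · intro x hx
      exact (hGpos' x hx).ne'
  -- limit of K at +infty is K₀
  have hKtop : Tendsto K atTop (nhds K₀) := by
    have hP0 : (derivative p) ^ 2 ≠ 0 := pow_ne_zero 2 (fun h => by
      rw [h] at hd1; simp at hd1; omega)
    have hQ0 : derivative (derivative p) * p ≠ 0 := mul_ne_zero hpp0 hp0
    have hdegeq : ((derivative p) ^ 2).degree = (derivative (derivative p) * p).degree := by
      rw [degree_eq_natDegree hP0, degree_eq_natDegree hQ0,
        natDegree_pow, natDegree_mul hpp0 hp0, hd1, hd2]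
      congr 1
      omega
    have := div_tendsto_leadingCoeff_div_of_degree_eq _ _ hdegeq
    have hlceq : ((derivative p) ^ 2).leadingCoeff /
        (derivative (derivative p) * p).leadingCoeff = K₀ := by
      rw [leadingCoeff_pow, leadingCoeff_mul, hlc1, hlc2, hK₀]
      field_simp
    rw [hlceq] at this
    convert this using 2 with y
    simp [hK, eval_pow, eval_mul]
  -- limit of K at zm from the right is +infty
  have hKzm : Tendsto K (nhdsWithin zm (Set.Ioi zm)) atTop := by
    have hnum : Tendsto (fun y => ((derivative p).eval y) ^ 2) (nhdsWithin zm (Set.Ioi zm))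
        (nhds (((derivative p).eval zm) ^ 2)) :=
      (((Polynomial.continuous (derivative p)).pow 2).tendsto zm).mono_left nhdsWithin_le_nhds
    have hne : (derivative p).eval zm ≠ 0 := by
      intro h
      exact absurd (huniq zm h) (by intro h'; rw [h'] at hzmp₀; exact lt_irrefl _ hzmp₀)
    have hnumpos : 0 < ((derivative p).eval zm) ^ 2 :=
      lt_of_le_of_ne (sq_nonneg _) (Ne.symm (pow_ne_zero 2 hne))
    have hden : Tendsto (fun y => ((derivative (derivative p)).eval y) * p.eval y)
        (nhdsWithin zm (Set.Ioi zm)) (nhdsWithin 0 (Set.Ioi 0)) := by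
      rw [tendsto_nhdsWithin_iff]
      constructor
      · have : Tendsto (fun y => ((derivative (derivative p)).eval y) * p.eval y)
            (nhds zm) (nhds (((derivative (derivative p)).eval zm) * p.eval zm)) :=
          ((Polynomial.continuous _).mul (Polynomial.continuous p)).tendsto zm
        rw [hzm, zero_mul] at this
        exact this.mono_left nhdsWithin_le_nhds
      · filter_upwards [self_mem_nhdsWithin] with y hy
        exact hGpos' y hy
    have hinv : Tendsto (fun y => (((derivative (derivative p)).eval y) * p.eval y)⁻¹)
        (nhdsWithin zm (Set.Ioi zm)) atTop := tendsto_inv_nhdsGT_zero.comp hden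
    have := Filter.Tendsto.pos_mul_atTop hnumpos hnum hinv
    convert this using 2 with y
    exact div_eq_mul_inv _ _
  -- main claim
  have main : ∀ c ∈ Set.Ioi zm, K c ≠ K₀ := by
    by_cases hlow : ∃ d ∈ Set.Ioi zm, K d < K₀
    · exfalso
      obtain ⟨d, hd, hKd⟩ := hlow
      have h1 : ∀ᶠ y in nhdsWithin zm (Set.Ioi zm), K d < K y := hKzm.eventually_gt_atTop (K d)
      have h2 : ∀ᶠ y in nhdsWithin zm (Set.Ioi zm), y < d :=
        eventually_nhdsWithin_of_eventually_nhds (eventually_lt_nhds hd)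
      have h3 : ∀ᶠ y in nhdsWithin zm (Set.Ioi zm), zm < y := eventually_mem_nhdsWithin
      obtain ⟨a', ha1, ha2, ha3⟩ := (h1.and (h2.and h3)).exists
      have h4 : ∀ᶠ y in atTop, K d < K y := hKtop.eventually (eventually_gt_nhds hKd)
      obtain ⟨B, hB1, hB2⟩ := (h4.and (eventually_gt_atTop d)).exists
      have hsub : Set.Icc a' B ⊆ Set.Ioi zm := fun y hy => lt_of_lt_of_le ha3 hy.1
      have hdmem : d ∈ Set.Icc a' B := ⟨ha2.le, hB2.le⟩
      obtain ⟨b, hbmem, hbmin⟩ := isCompact_Icc.exists_isMinOn ⟨d, hdmem⟩ (hKcont.mono hsub)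
      have hKbd : K b ≤ K d := hbmin hdmem
      have hb1 : a' < b := by
        rcases lt_or_eq_of_le hbmem.1 with h | h
        · exact h
        · exfalso; rw [← h] at hKbd; linarith
      have hb2 : b < B := by
        rcases lt_or_eq_of_le hbmem.2 with h | h
        · exact h
        · exfalso; rw [h] at hKbd; linarith
      have hlocal : IsLocalMin K b := hbmin.isLocalMin (Icc_mem_nhds hb1 hb2)
      have hbIoi : b ∈ Set.Ioi zm := hsub hbmem
      rcases hyp with h | h
      · exact h b hbIoi hlocal.isExtr
      · have h5 : K₀ < K b := h b hbIoi hlocal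
        linarith
    · push_neg at hlow
      intro c hc hceq
      have hmin : IsLocalMin K c := by
        have hmem : Set.Ioi zm ∈ nhds c := Ioi_mem_nhds hc
        filter_upwards [hmem] with y hy
        rw [hceq]
        exact hlow y hy
      rcases hyp with h | h
      · exact h c hc hmin.isExtr
      · have := h c hc hmin
        rw [show ((derivative p).eval c) ^ 2 /
            (((derivative (derivative p)).eval c) * p.eval c) = K c from rfl, hceq] at this
        exact lt_irrefl _ this
  -- conclusion
  intro x hx hΔ
  apply main x hx
  have hgx := hGpos' x hx
  have hΔ' : ((n:ℝ) - 1) * ((derivative p).eval x) ^ 2 =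
      (n:ℝ) * (p.eval x * (derivative (derivative p)).eval x) := by
    simp only [eval_sub, eval_mul, eval_pow, eval_C] at hΔ
    linarith
  rw [hK, hK₀]
  simp only
  rw [div_eq_div_iff hgx.ne' hn1.ne']
  nlinarith [hΔ']
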